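/- (Bayesian forward method.) (i) The total mass of the unnormalized posterior equals the mass of the terminal unnormalized filtering function: ∫_{E^{T+1}} U(x₀,…,x_T) dμ^{⊗(T+1)} = ∫_E π_T(x_T) μ(dx_T). (ii) For every point (x₀,…,x_T) ∈ E^{T+1} such that 0 < π_t(x_t) < ∞ for all 1 ≤ t ≤ T, the unnormalized posterior admits the reverse-time Markov factorization U(x₀,…,x_T) = π_T(x_T) · ∏_{t=1}^{T} [ u_t(x_{t−1},x_t)·π_{t−1}(x_{t−1}) / π_t(x_t) ]. (iii) For every 1 ≤ t ≤ T and every y ∈ E with 0 < π_t(y) < ∞, the reverse-time factor is a probability density: ∫_E u_t(x,y)·π_{t−1}(x) / π_t(y) μ(dx) = 1. -/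

import Mathlib

open MeasureTheory ENNReal
open scoped ENNReal BigOperators
open Fin.NatCast

private lemma natCast_fin_castSucc {n t : ℕ} (ht : t ≤ n) :
    ((t : ℕ) : Fin (n + 2)) = Fin.castSucc ((t : ℕ) : Fin (n + 1)) := by
  ext
  simp [Fin.val_cast_of_lt (Nat.lt_succ_of_le ht),
    Fin.val_cast_of_lt (Nat.lt_succ_of_le (Nat.le_succ_of_le ht))]

private lemma snoc_natCast {E : Type*} {n : ℕ} (x : Fin (n + 1) → E) (y : E) {t : ℕ}
    (ht : t ≤ n) :
    (Fin.snoc x y : Fin (n + 2) → E) ((t : ℕ) : Fin (n + 2)) = x ((t : ℕ) : Fin (n + 1)) := by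
  rw [natCast_fin_castSucc ht, Fin.snoc_castSucc]

private lemma snoc_last_natCast {E : Type*} {n : ℕ} (x : Fin (n + 1) → E) (y : E) :
    (Fin.snoc x y : Fin (n + 2) → E) (((n + 1 : ℕ)) : Fin (n + 2)) = y := by
  have h : (((n + 1 : ℕ)) : Fin (n + 2)) = Fin.last (n + 1) := by
    ext; rw [Fin.val_cast_of_lt (Nat.lt_succ_self (n + 1))]; rfl
  rw [h, Fin.snoc_last]

private lemma lintegral_snoc_aux {E : Type*} [MeasurableSpace E] (μ : Measure E) [SigmaFinite μ]
    (n : ℕ) (F : (Fin (n + 1) → E) → ℝ≥0∞) (hF : Measurable F) :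
    (∫⁻ x : Fin (n + 1) → E, F x ∂(Measure.pi fun _ => μ))
      = ∫⁻ x : Fin n → E, ∫⁻ y, F (Fin.snoc x y) ∂μ ∂(Measure.pi fun _ => μ) := by
  have h := (measurePreserving_piFinSuccAbove (fun _ : Fin (n + 1) => μ) (Fin.last n)).symm
  rw [← h.lintegral_comp hF]
  rw [lintegral_prod_symm'
    (fun a : E × (Fin n → E) =>
      F ((MeasurableEquiv.piFinSuccAbove (fun _ : Fin (n + 1) => E) (Fin.last n)).symm a))
    (hF.comp (MeasurableEquiv.piFinSuccAbove _ _).symm.measurable)]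
  congr 1
  ext x
  congr 1
  ext y
  congr 1
  show (Fin.insertNthEquiv (fun _ => E) (Fin.last n)) (y, x) = Fin.snoc x y
  simp [Fin.insertNthEquiv, Fin.insertNth_last']

private lemma telescope_aux (a b : ℕ → ℝ≥0∞) :
    ∀ n : ℕ, (∀ t, 1 ≤ t → t ≤ n → 0 < b t ∧ b t < ∞) →
      b 0 * ∏ t ∈ Finset.Icc 1 n, a t
        = b n * ∏ t ∈ Finset.Icc 1 n, a t * b (t - 1) / b t := by
  intro n
  induction n with
  | zero => simp
  | succ n ih =>
    intro h
    have hb0 : b (n + 1) ≠ 0 := (h (n + 1) (by omega) le_rfl).1.ne'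
    have hbt : b (n + 1) ≠ ∞ := (h (n + 1) (by omega) le_rfl).2.ne
    have ih' := ih fun t h1 h2 => h t h1 (by omega)
    rw [Finset.prod_Icc_succ_top (by omega), Finset.prod_Icc_succ_top (by omega)]
    rw [show (n + 1 - 1 : ℕ) = n from rfl]
    conv_lhs => rw [← mul_assoc, ih']
    rw [mul_comm (∏ t ∈ Finset.Icc 1 n, a t * b (t - 1) / b t)
        (a (n + 1) * b n / b (n + 1)),
      ← mul_assoc, ENNReal.mul_div_cancel hb0 hbt]
    ring

private lemma key_aux {E : Type*} [MeasurableSpace E] (μ : Measure E) [SigmaFinite μ]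
    (v : ℕ → E × E → ℝ≥0∞) (hv : ∀ t, Measurable (v t)) :
    ∀ (n : ℕ) (p : ℕ → E → ℝ≥0∞), (∀ t, t ≤ n → Measurable (p t)) →
      (∀ t, 1 ≤ t → t ≤ n → ∀ y, p t y = ∫⁻ x, v t (x, y) * p (t - 1) x ∂μ) →
      ∀ g : E → ℝ≥0∞, Measurable g →
      (∫⁻ x : Fin (n + 1) → E,
          (p 0 (x 0) * ∏ t ∈ Finset.Icc 1 n, v t (x ↑(t - 1), x ↑t)) * g (x ↑n)
          ∂(Measure.pi fun _ => μ))
        = ∫⁻ y, p n y * g y ∂μ := by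
  intro n
  induction n with
  | zero =>
    intro p hpm _ g hg
    have hm0 : Measurable fun y => p 0 y * g y := (hpm 0 le_rfl).mul hg
    rw [← (measurePreserving_funUnique μ (Fin 1)).lintegral_comp hm0]
    congr 1
    ext x
    simp [MeasurableEquiv.funUnique, Finset.Icc_eq_empty_of_lt (by norm_num : (0:ℕ) < 1)]
  | succ n ih =>
    intro p hpm hrec g hg
    set G : E → ℝ≥0∞ := fun z => ∫⁻ y, v (n + 1) (z, y) * g y ∂μ with hGdef
    have hG : Measurable G :=
      Measurable.lintegral_prod_right ((hv (n + 1)).mul (hg.comp measurable_snd))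
    have hF : Measurable (fun x : Fin (n + 2) → E =>
        (p 0 (x 0) * ∏ t ∈ Finset.Icc 1 (n + 1), v t (x ↑(t - 1), x ↑t)) * g (x ↑(n + 1))) := by
      refine (((hpm 0 (by omega)).comp (measurable_pi_apply 0)).mul
        (Finset.measurable_prod _ fun t _ => (hv t).comp
          ((measurable_pi_apply _).prodMk (measurable_pi_apply _)))).mul
        (hg.comp (measurable_pi_apply _))
    rw [lintegral_snoc_aux μ (n + 1) _ hF]
    have hpt : ∀ x : Fin (n + 1) → E, ∀ y : E,
        (p 0 ((Fin.snoc x y : Fin (n + 2) → E) 0) *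
            ∏ t ∈ Finset.Icc 1 (n + 1),
              v t ((Fin.snoc x y : Fin (n + 2) → E) ↑(t - 1),
                (Fin.snoc x y : Fin (n + 2) → E) ↑t)) *
          g ((Fin.snoc x y : Fin (n + 2) → E) ↑(n + 1))
        = (p 0 (x 0) * ∏ t ∈ Finset.Icc 1 n, v t (x ↑(t - 1), x ↑t)) *
            (v (n + 1) (x ↑n, y) * g y) := by
      intro x y
      rw [Finset.prod_Icc_succ_top (by omega), snoc_last_natCast,
        snoc_natCast x y (t := n + 1 - 1) (by omega)]
      have h0 : (Fin.snoc x y : Fin (n + 2) → E) 0 = x 0 := by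
        have h00 : (0 : Fin (n + 2)) = Fin.castSucc (0 : Fin (n + 1)) := rfl
        rw [h00, Fin.snoc_castSucc]
      have hprod : (∏ k ∈ Finset.Icc 1 n,
            v k ((Fin.snoc x y : Fin (n + 2) → E) ↑(k - 1),
              (Fin.snoc x y : Fin (n + 2) → E) ↑k))
          = ∏ k ∈ Finset.Icc 1 n, v k (x ↑(k - 1), x ↑k) :=
        Finset.prod_congr rfl fun k hk => by
          simp only [Finset.mem_Icc] at hk
          rw [snoc_natCast x y (by omega), snoc_natCast x y (by omega)]
      rw [h0, hprod, Nat.add_sub_cancel]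
      ring
    calc (∫⁻ x : Fin (n + 1) → E, ∫⁻ y,
            (p 0 ((Fin.snoc x y : Fin (n + 2) → E) 0) *
                ∏ t ∈ Finset.Icc 1 (n + 1),
                  v t ((Fin.snoc x y : Fin (n + 2) → E) ↑(t - 1),
                    (Fin.snoc x y : Fin (n + 2) → E) ↑t)) *
              g ((Fin.snoc x y : Fin (n + 2) → E) ↑(n + 1)) ∂μ
            ∂(Measure.pi fun _ => μ))
        = ∫⁻ x : Fin (n + 1) → E,
            (p 0 (x 0) * ∏ t ∈ Finset.Icc 1 n, v t (x ↑(t - 1), x ↑t)) * G (x ↑n)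
            ∂(Measure.pi fun _ => μ) := by
          refine lintegral_congr fun x => ?_
          simp_rw [hpt x]
          have hmeas : Measurable fun y => v (n + 1) (x ↑n, y) * g y :=
            ((hv (n + 1)).comp measurable_prodMk_left).mul hg
          rw [lintegral_const_mul _ hmeas]
      _ = ∫⁻ z, p n z * G z ∂μ :=
          ih p (fun t ht => hpm t (by omega))
            (fun t h1 h2 => hrec t h1 (by omega)) G hG
      _ = ∫⁻ z, ∫⁻ y, p n z * (v (n + 1) (z, y) * g y) ∂μ ∂μ := by
          refine lintegral_congr fun z => ?_
          rw [hGdef]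
          have hmeas : Measurable fun y => v (n + 1) (z, y) * g y :=
            ((hv (n + 1)).comp measurable_prodMk_left).mul hg
          exact (lintegral_const_mul _ hmeas).symm
      _ = ∫⁻ y, ∫⁻ z, p n z * (v (n + 1) (z, y) * g y) ∂μ ∂μ := by
          refine lintegral_lintegral_swap ?_
          exact (((hpm n (by omega)).comp measurable_fst).mul
            ((hv (n + 1)).mul (hg.comp measurable_snd))).aemeasurable
      _ = ∫⁻ y, p (n + 1) y * g y ∂μ := by
          refine lintegral_congr fun y => ?_
          have : (fun z => p n z * (v (n + 1) (z, y) * g y))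
              = fun z => (v (n + 1) (z, y) * p n z) * g y := by
            ext z; ring
          have hmeas : Measurable fun z => v (n + 1) (z, y) * p n z :=
            ((hv (n + 1)).comp measurable_prodMk_right).mul (hpm n (by omega))
          rw [this, lintegral_mul_const _ hmeas,
            hrec (n + 1) (by omega) (by omega) y]
          rfl

/-- **Bayesian forward method.**
Let `(E, 𝓔, μ)` be a σ-finite measure space, `T` a time horizon, `u₀` the unnormalized
initial density and `u t` (for `1 ≤ t ≤ T`) the one-step unnormalized transition densities.
The unnormalized posterior on `E^{T+1}` is `U x = u₀ (x 0) * ∏_{t=1}^T u t (x (t-1), x t)`.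
The unnormalized filtering functions satisfy `π 0 = u₀` and
`π t y = ∫ u t (x, y) * π (t-1) x μ(dx)`.  Then:
(i) the total mass of `U` equals `∫ π T x_T μ(dx_T)`;
(ii) wherever `0 < π t (x t) < ∞` for all `1 ≤ t ≤ T`, `U` admits the reverse-time Markov
factorization `U x = π T (x T) * ∏_{t=1}^T u t (x (t-1), x t) * π (t-1) (x (t-1)) / π t (x t)`;
(iii) each reverse-time factor is a probability density. -/
theorem bayesian_forward_method
    {E : Type*} [MeasurableSpace E] (μ : Measure E) [SigmaFinite μ] (T : ℕ)
    (u₀ : E → ℝ≥0∞) (hu₀ : Measurable u₀)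
    (u : ℕ → E × E → ℝ≥0∞) (hu : ∀ t, Measurable (u t))
    (π : ℕ → E → ℝ≥0∞)
    (hπ0 : ∀ x, π 0 x = u₀ x)
    (hπrec : ∀ t, 1 ≤ t → t ≤ T → ∀ y, π t y = ∫⁻ x, u t (x, y) * π (t - 1) x ∂μ) :
    -- (i)
    ((∫⁻ x : Fin (T + 1) → E,
        u₀ (x 0) * ∏ t ∈ Finset.Icc 1 T, u t (x ↑(t - 1), x ↑t)
        ∂(Measure.pi fun _ : Fin (T + 1) => μ))
      = ∫⁻ xT, π T xT ∂μ)
    -- (ii)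
    ∧ (∀ x : Fin (T + 1) → E,
        (∀ t, 1 ≤ t → t ≤ T → 0 < π t (x ↑t) ∧ π t (x ↑t) < ∞) →
        u₀ (x 0) * ∏ t ∈ Finset.Icc 1 T, u t (x ↑(t - 1), x ↑t)
          = π T (x ↑T) *
            ∏ t ∈ Finset.Icc 1 T,
              u t (x ↑(t - 1), x ↑t) * π (t - 1) (x ↑(t - 1)) / π t (x ↑t))
    -- (iii)
    ∧ (∀ t, 1 ≤ t → t ≤ T → ∀ y : E, 0 < π t y → π t y < ∞ →
        (∫⁻ x, u t (x, y) * π (t - 1) x / π t y ∂μ) = 1) := by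
  have hπmeas : ∀ t, t ≤ T → Measurable (π t) := by
    intro t
    induction t with
    | zero =>
      intro _
      have h0 : π 0 = u₀ := funext hπ0
      rw [h0]; exact hu₀
    | succ k ih =>
      intro hk
      have hk' : π (k + 1) = fun y => ∫⁻ x, u (k + 1) (x, y) * π k x ∂μ := by
        funext y
        exact hπrec (k + 1) (by omega) hk y
      rw [hk']
      exact Measurable.lintegral_prod_left
        ((hu (k + 1)).mul ((ih (by omega)).comp measurable_fst))
  refine ⟨?_, ?_, ?_⟩
  · have h1 := key_aux μ u hu T π hπmeas hπrec (fun _ => 1) measurable_const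
    simp only [mul_one, hπ0] at h1
    exact h1
  · intro x hx
    have h2 := telescope_aux (fun t => u t (x ↑(t - 1), x ↑t)) (fun t => π t (x ↑t)) T hx
    simp only [Nat.cast_zero, hπ0] at h2
    exact h2
  · intro t h1 h2 y hpos hfin
    simp_rw [div_eq_mul_inv]
    rw [lintegral_mul_const' _ _ (by simp [hpos.ne'])]
    rw [← hπrec t h1 h2 y]
    exact ENNReal.mul_inv_cancel hpos.ne' hfin.ne
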